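/- arXiv:2302.08502 — 2 statements merged into one kernel-verified Lean document; each statement's English description precedes it below -/
import Mathlib

section
/- The Haar-random-circuit line tension E_H(v) = [log((d²+1)/d) + ((1+v)/2) log((1+v)/2) + ((1−v)/2) log((1−v)/2)]/log d, defined for v ∈ (−1,1) and integer d ≥ 2, is even, convex, satisfies E_H(v) ≥ E_H(0) > 0, and its derivative equation E_H(0) − 2E_H(v) + 2v E_H'(v) = 0 on (0,1) is solved by v = v_d := (d−1)/√(d²+1). -/
/-- The Haar-random-circuit line tension (Eq. (eq:linetensionHaar) of the paper). -/
noncomputable def lineTensionHaar (d : ℕ) (v : ℝ) : ℝ :=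
  (Real.log (((d : ℝ) ^ 2 + 1) / d)
      + ((1 + v) / 2) * Real.log ((1 + v) / 2)
      + ((1 - v) / 2) * Real.log ((1 - v) / 2)) / Real.log d

private lemma convex_aux (c : ℝ) (hc : c = 1 ∨ c = -1) :
    ConvexOn ℝ (Set.Ioo (-1 : ℝ) 1)
      (fun v : ℝ => ((1 + c * v) / 2) * Real.log ((1 + c * v) / 2)) := by
  have habs : ∀ x : ℝ, x ∈ Set.Ioo (-1:ℝ) 1 → (0:ℝ) ≤ (1 + c * x) / 2 := by
    intro x hx
    simp only [Set.mem_Ioo] at hx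
    rcases hc with h | h <;> subst h <;> nlinarith [hx.1, hx.2]
  refine ⟨convex_Ioo _ _, fun x hx y hy a b ha hb hab => ?_⟩
  have h := Real.convexOn_mul_log.2 (Set.mem_Ici.2 (habs x hx))
    (Set.mem_Ici.2 (habs y hy)) ha hb hab
  simp only [smul_eq_mul] at h ⊢
  have harg : (1 + c * (a * x + b * y)) / 2
      = a * ((1 + c * x) / 2) + b * ((1 + c * y) / 2) := by
    linear_combination (-(1:ℝ)/2) * hab
  rw [harg]
  exact h

/-- The Haar line tension `E_H` is even, convex on `(-1,1)`, minimised at `0`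
with `E_H(0) > 0`, and the stationarity equation
`E_H(0) - 2 E_H(v) + 2 v E_H'(v) = 0` is solved by `v_d = (d-1)/√(d²+1)`. -/
theorem lineTensionHaar_properties (d : ℕ) (hd : 2 ≤ d) :
    (∀ v : ℝ, lineTensionHaar d (-v) = lineTensionHaar d v) ∧
    ConvexOn ℝ (Set.Ioo (-1 : ℝ) 1) (lineTensionHaar d) ∧
    (∀ v ∈ Set.Ioo (-1 : ℝ) 1, lineTensionHaar d 0 ≤ lineTensionHaar d v) ∧
    0 < lineTensionHaar d 0 ∧
    lineTensionHaar d 0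
        - 2 * lineTensionHaar d (((d : ℝ) - 1) / Real.sqrt ((d : ℝ) ^ 2 + 1))
        + 2 * (((d : ℝ) - 1) / Real.sqrt ((d : ℝ) ^ 2 + 1))
          * deriv (lineTensionHaar d) (((d : ℝ) - 1) / Real.sqrt ((d : ℝ) ^ 2 + 1)) = 0 := by
  have hd2 : (2:ℝ) ≤ (d:ℝ) := by exact_mod_cast hd
  have hdpos : (0:ℝ) < d := by linarith
  have hL : 0 < Real.log d := Real.log_pos (by linarith)
  -- evenness
  have heven : ∀ v : ℝ, lineTensionHaar d (-v) = lineTensionHaar d v := by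
    intro v
    unfold lineTensionHaar
    have h1 : (1 + -v) / 2 = (1 - v)/2 := by ring
    have h2 : (1 - -v) / 2 = (1 + v)/2 := by ring
    rw [h1, h2]; ring
  -- convexity
  have hconv : ConvexOn ℝ (Set.Ioo (-1 : ℝ) 1) (lineTensionHaar d) := by
    have h1 := convex_aux 1 (Or.inl rfl)
    have h2 := convex_aux (-1) (Or.inr rfl)
    simp only [one_mul, neg_one_mul] at h1 h2
    have h2' : ConvexOn ℝ (Set.Ioo (-1 : ℝ) 1)
        (fun v : ℝ => ((1 - v) / 2) * Real.log ((1 - v) / 2)) := by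
      simp only [← sub_eq_add_neg] at h2; exact h2
    have hsum := ((convexOn_const (Real.log (((d : ℝ) ^ 2 + 1) / d))
      (convex_Ioo (-1:ℝ) 1)).add h1).add h2'
    have hfun : lineTensionHaar d = (Real.log (d:ℝ))⁻¹ •
        (fun v : ℝ => Real.log (((d : ℝ) ^ 2 + 1) / d)
          + ((1 + v) / 2) * Real.log ((1 + v) / 2)
          + ((1 - v) / 2) * Real.log ((1 - v) / 2)) := by
      funext v
      simp only [Pi.smul_apply, smul_eq_mul, lineTensionHaar]
      ring
    rw [hfun]
    exact hsum.smul (by positivity)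
  refine ⟨heven, hconv, ?_, ?_, ?_⟩
  · -- minimum at 0
    intro v hv
    have hv' : -v ∈ Set.Ioo (-1:ℝ) 1 := by
      simp only [Set.mem_Ioo] at hv ⊢; constructor <;> linarith [hv.1, hv.2]
    have h := hconv.2 hv hv' (by norm_num : (0:ℝ) ≤ 1/2) (by norm_num : (0:ℝ) ≤ 1/2)
      (by norm_num)
    simp only [smul_eq_mul, heven v] at h
    have harg : (1/2) * v + (1/2) * (-v) = (0:ℝ) := by ring
    rw [harg] at h
    linarith
  · -- positivity at 0
    unfold lineTensionHaar
    have h0 : (1 + (0:ℝ))/2 = 1/2 := by norm_num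
    have h0' : (1 - (0:ℝ))/2 = 1/2 := by norm_num
    rw [h0, h0']
    have hlhalf : Real.log (1/2 : ℝ) = - Real.log 2 := by
      rw [one_div, Real.log_inv]
    rw [hlhalf]
    have hnum : Real.log (((d:ℝ)^2+1)/d) > Real.log 2 := by
      apply Real.log_lt_log (by norm_num)
      rw [lt_div_iff₀ hdpos]
      nlinarith
    apply div_pos _ hL
    nlinarith
  · -- stationarity at v_d
    set s := Real.sqrt ((d : ℝ) ^ 2 + 1) with hs_def
    have hspos : 0 < s := Real.sqrt_pos.2 (by positivity)
    have hs2 : s ^ 2 = (d:ℝ)^2 + 1 := Real.sq_sqrt (by positivity)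
    set v₀ := ((d:ℝ) - 1) / s with hv0_def
    have hv0nn : 0 ≤ v₀ := div_nonneg (by linarith) hspos.le
    have hv0lt : v₀ < 1 := by
      rw [div_lt_one hspos]
      nlinarith [hs2, hspos]
    have ha : (0:ℝ) < (1 + v₀)/2 := by linarith
    have hb : (0:ℝ) < (1 - v₀)/2 := by linarith
    have hv0sq : v₀ ^ 2 = ((d:ℝ)-1)^2 / ((d:ℝ)^2+1) := by
      rw [hv0_def, div_pow, hs2]
    have hab : ((1 + v₀)/2) * ((1 - v₀)/2) = (d:ℝ) / (2 * ((d:ℝ)^2+1)) := by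
      have h1 : ((1 + v₀)/2) * ((1 - v₀)/2) = (1 - v₀^2)/4 := by ring
      rw [h1, hv0sq]
      field_simp
      ring
    -- derivative
    have hA : HasDerivAt (fun v : ℝ => (1 + v)/2) (1/2) v₀ := by
      simpa using ((hasDerivAt_id v₀).const_add 1).div_const 2
    have hB : HasDerivAt (fun v : ℝ => (1 - v)/2) (-1/2) v₀ := by
      simpa using ((hasDerivAt_id v₀).const_sub 1).div_const 2
    have hA' := (hA.mul (hA.log ha.ne'))
    have hB' := (hB.mul (hB.log hb.ne'))
    have hf : HasDerivAt (lineTensionHaar d)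
        (((1/2) * Real.log ((1 + v₀)/2) + ((1 + v₀)/2) * ((1/2) / ((1 + v₀)/2))
          + ((-1/2) * Real.log ((1 - v₀)/2) + ((1 - v₀)/2) * ((-1/2) / ((1 - v₀)/2))))
          / Real.log d) v₀ := by
      have := (((hasDerivAt_const v₀ (Real.log (((d : ℝ) ^ 2 + 1) / d))).add hA').add
        hB').div_const (Real.log d)
      rw [zero_add] at this; exact this
    rw [hf.deriv]
    -- key log identities
    have hlab : Real.log ((1 + v₀)/2) + Real.log ((1 - v₀)/2)
        = Real.log d - Real.log 2 - Real.log ((d:ℝ)^2 + 1) := by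
      rw [← Real.log_mul ha.ne' hb.ne', hab, Real.log_div (by positivity) (by positivity),
        Real.log_mul (by norm_num) (by positivity)]
      ring
    have hC : Real.log (((d:ℝ)^2+1)/d) = Real.log ((d:ℝ)^2+1) - Real.log d := by
      rw [Real.log_div (by positivity) hdpos.ne']
    have hlhalf : Real.log ((1:ℝ)/2) = - Real.log 2 := by
      rw [one_div, Real.log_inv]
    unfold lineTensionHaar
    rw [hC]
    have e0 : (1 + (0:ℝ))/2 = 1/2 := by norm_num
    have e0' : (1 - (0:ℝ))/2 = 1/2 := by norm_num
    rw [e0, e0', hlhalf]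
    have hcanc1 : ((1 + v₀)/2) * ((1/2) / ((1 + v₀)/2)) = 1/2 := by
      rw [mul_comm]; exact div_mul_cancel₀ _ ha.ne'
    have hcanc2 : ((1 - v₀)/2) * ((-1/2) / ((1 - v₀)/2)) = -1/2 := by
      rw [mul_comm]; exact div_mul_cancel₀ _ hb.ne'
    rw [hcanc1, hcanc2]
    set la := Real.log ((1 + v₀)/2)
    set lb := Real.log ((1 - v₀)/2)
    field_simp
    linear_combination (-2) * hlab
end

section
/- Define A_{x,y} for integers x ≥ 0, 0 ≤ y ≤ x+1 by the recurrence: A_{x,0} = (2d²/(d²+1))^x; A_{x,y} = (d²/(d²+1))(A_{x−1,y} + A_{x,y−1}) for 0 < y ≤ x; and A_{x,x+1} = (d²/(d²+1))(A_{x−1,x} + A_{x,x}). Then for fixed real d > 1 there exist constants 0 < c₁ ≤ c₂ and T such that for all t ≥ T, c₁ (2d²/(d²+1))^{2t} t^{−1/2} ≤ A_{t,t+1} ≤ c₂ (2d²/(d²+1))^{2t} t^{−1/2}. -/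
open Finset


private lemma ident4 (n : ℕ) :
    ∑ i ∈ range (n+1), (n+i).choose i * 2^(n-i) = 4^n := by
  induction n with
  | zero => simp
  | succ n ih =>
    set S := ∑ i ∈ range (n+2), (n+1+i).choose i * 2^(n+1-i) with hS
    set P := ∑ i ∈ range (n+1), (n+1+i).choose i * 2^(n-i) with hP
    have E1 : S = 2*P + (2*n+2).choose (n+1) := by
      rw [hS, Finset.sum_range_succ]
      have h1 : ∑ i ∈ range (n+1), (n+1+i).choose i * 2^(n+1-i)
          = ∑ i ∈ range (n+1), 2 * ((n+1+i).choose i * 2^(n-i)) := by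
        apply Finset.sum_congr rfl
        intro i hi
        have : n+1-i = (n-i)+1 := by
          have := Finset.mem_range.mp hi; omega
        rw [this, pow_succ]; ring
      rw [h1, ← Finset.mul_sum, ← hP,
        show n+1+(n+1) = 2*n+2 by omega, show n+1-(n+1) = 0 by omega, pow_zero, mul_one]
    have E2 : S = 2^(n+1) + P + (2*(∑ i ∈ range n, (n+1+i).choose (i+1) * 2^(n-1-i))
          + (2*n+1).choose (n+1)) := by
      rw [hS, Finset.sum_range_succ']
      have h2 : ∀ i ∈ range (n+1), (n+1+(i+1)).choose (i+1) * 2^(n+1-(i+1))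
          = (n+1+i).choose i * 2^(n-i) + (n+1+i).choose (i+1) * 2^(n-i) := by
        intro i hi
        have ha : n+1+(i+1) = (n+1+i)+1 := by omega
        have hb : n+1-(i+1) = n-i := by omega
        rw [ha, hb, Nat.choose_succ_succ, add_mul]
      rw [Finset.sum_congr rfl h2, Finset.sum_add_distrib]
      have h3 : ∑ i ∈ range (n+1), (n+1+i).choose (i+1) * 2^(n-i)
          = 2*(∑ i ∈ range n, (n+1+i).choose (i+1) * 2^(n-1-i)) + (2*n+1).choose (n+1) := by
        rw [Finset.sum_range_succ]
        have h4 : ∑ i ∈ range n, (n+1+i).choose (i+1) * 2^(n-i)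
            = ∑ i ∈ range n, 2 * ((n+1+i).choose (i+1) * 2^(n-1-i)) := by
          apply Finset.sum_congr rfl
          intro i hi
          have : n-i = (n-1-i)+1 := by have := Finset.mem_range.mp hi; omega
          rw [this, pow_succ]; ring
        rw [h4, ← Finset.mul_sum,
          show n+1+n = 2*n+1 by omega, show n-n = 0 by omega, pow_zero, mul_one]
      rw [h3]
      simp
      ring
    -- from ih : relate R
    have hR : 2^n + ∑ i ∈ range n, (n+1+i).choose (i+1) * 2^(n-1-i) = 4^n := by
      rw [← ih, Finset.sum_range_succ']
      have : ∀ i ∈ range n, (n+(i+1)).choose (i+1) * 2^(n-(i+1))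
          = (n+1+i).choose (i+1) * 2^(n-1-i) := by
        intro i hi
        have ha : n+(i+1) = n+1+i := by omega
        have hb : n-(i+1) = n-1-i := by omega
        rw [ha, hb]
      rw [Finset.sum_congr rfl this]
      simp
      ring
    have hsymm : (2*n+1).choose (n+1) = (2*n+1).choose n := by
      have := Nat.choose_symm (show n+1 ≤ 2*n+1 by omega)
      simpa [show 2*n+1-(n+1) = n by omega] using this.symm
    have hcent : (2*n+2).choose (n+1) = (2*n+1).choose n + (2*n+1).choose (n+1) := by
      have := Nat.choose_succ_succ (2*n+1) n
      simpa [show 2*n+1+1 = 2*n+2 by omega] using this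
    have goal4 : (4:ℕ)^(n+1) = 4*4^n := by ring
    show S = 4^(n+1)
    omega


private lemma cb_sq_upper (n : ℕ) : (3*n+1) * (Nat.centralBinom n)^2 ≤ 16^n := by
  induction n with
  | zero => simp [Nat.centralBinom]
  | succ n ih =>
    have key := Nat.succ_mul_centralBinom_succ n
    refine Nat.le_of_mul_le_mul_left ?_ (show 0 < (n+1)^2 by positivity)
    calc (n+1)^2 * ((3*(n+1)+1) * (Nat.centralBinom (n+1))^2)
          = (3*n+4) * ((n+1) * Nat.centralBinom (n+1))^2 := by ring
        _ = (3*n+4) * (2*(2*n+1)*Nat.centralBinom n)^2 := by rw [key]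
        _ ≤ (n+1)^2 * (16 * ((3*n+1) * (Nat.centralBinom n)^2)) := by
            nlinarith [sq_nonneg (Nat.centralBinom n)]
        _ ≤ (n+1)^2 * (16 * 16^n) := by
            exact Nat.mul_le_mul_left _ (Nat.mul_le_mul_left 16 ih)
        _ = (n+1)^2 * 16^(n+1) := by ring

private lemma cb_sq_lower (n : ℕ) (hn : 1 ≤ n) : 16^n ≤ 4*n * (Nat.centralBinom n)^2 := by
  induction n with
  | zero => omega
  | succ n ih =>
    rcases Nat.eq_zero_or_pos n with rfl | hn1
    · norm_num [Nat.centralBinom]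
    · have ihn := ih hn1
      have key := Nat.succ_mul_centralBinom_succ n
      refine Nat.le_of_mul_le_mul_left ?_ (show 0 < (n+1)^2 by positivity)
      calc (n+1)^2 * 16^(n+1) = (n+1)^2 * (16 * 16^n) := by ring
          _ ≤ (n+1)^2 * (16 * (4*n * (Nat.centralBinom n)^2)) :=
              Nat.mul_le_mul_left _ (Nat.mul_le_mul_left 16 ihn)
          _ ≤ (4*(n+1)) * (2*(2*n+1)*Nat.centralBinom n)^2 := by
              nlinarith [sq_nonneg (Nat.centralBinom n)]
          _ = (4*(n+1)) * ((n+1) * Nat.centralBinom (n+1))^2 := by rw [key]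
          _ = (n+1)^2 * (4*(n+1) * (Nat.centralBinom (n+1))^2) := by ring

private lemma choose_decay (t : ℕ) : ∀ k, 1 ≤ k → k ≤ t → 2^k * (2*t-k).choose t ≤ (2*t).choose t := by
  intro k
  induction k with
  | zero => omega
  | succ k ih =>
    intro _ hk
    rcases Nat.eq_zero_or_pos k with rfl | hk1
    · have ht : 1 ≤ t := hk
      have hp : (2*t).choose t = (2*t-1).choose (t-1) + (2*t-1).choose t := by
        have h := Nat.choose_succ_succ (2*t-1) (t-1)
        simp only [Nat.succ_eq_add_one] at h
        rw [show 2*t-1+1 = 2*t by omega, show t-1+1 = t by omega] at h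
        exact h
      have hsym : (2*t-1).choose (t-1) = (2*t-1).choose t := by
        have h := Nat.choose_symm (show t ≤ 2*t-1 by omega)
        rw [show 2*t-1-t = t-1 by omega] at h
        exact h
      have : 2^(0+1) * (2*t-(0+1)).choose t = 2 * (2*t-1).choose t := by norm_num
      omega
    · have hk' : k ≤ t := by omega
      have ihk := ih hk1 hk'
      have hstep : 2 * (2*t-(k+1)).choose t ≤ (2*t-k).choose t := by
        have hp : (2*t-k).choose t = (2*t-k-1).choose (t-1) + (2*t-k-1).choose t := by
          have h := Nat.choose_succ_succ (2*t-k-1) (t-1)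
          simp only [Nat.succ_eq_add_one] at h
          rw [show 2*t-k-1+1 = 2*t-k by omega, show t-1+1 = t by omega] at h
          exact h
        have hmono : (2*t-k-1).choose t ≤ (2*t-k-1).choose (t-1) := by
          have heq := Nat.choose_succ_right_eq (2*t-k-1) (t-1)
          rw [show t-1+1 = t by omega, show 2*t-k-1 - (t-1) = t-k by omega] at heq
          by_contra hcon
          push_neg at hcon
          have hpos : 0 < (2*t-k-1).choose t := Nat.choose_pos (show t ≤ 2*t-k-1 by omega)
          nlinarith [heq, hcon, hpos, (show t-k < t by omega)]
        rw [show 2*t-(k+1) = 2*t-k-1 by omega]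
        omega
      calc 2^(k+1) * (2*t-(k+1)).choose t = 2^k * (2 * (2*t-(k+1)).choose t) := by ring
        _ ≤ 2^k * (2*t-k).choose t := Nat.mul_le_mul_left _ hstep
        _ ≤ (2*t).choose t := ihk

private noncomputable def Faux (r : ℝ) (x y : ℕ) : ℝ :=
  2^(x+y) + 2 * ∑ i ∈ Finset.range x, (r^(y-1-i) - 2^(y-1-i)) * ((x+i).choose x : ℝ)

private lemma Faux_y0 (r : ℝ) (x : ℕ) : Faux r x 0 = 2^x := by
  simp [Faux]

private lemma Faux_y1 (r : ℝ) (x : ℕ) : Faux r x 1 = 2^(x+1) := by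
  simp [Faux]

private lemma Faux_interior (r : ℝ) (n m : ℕ) (h : m ≤ n) :
    Faux r (n+1) (m+1) = Faux r n (m+1) + Faux r (n+1) m := by
  have claim : ∑ i ∈ range (n+1), (r^(m-i) - 2^(m-i)) * ((n+1+i).choose (n+1) : ℝ)
      = ∑ i ∈ range n, (r^(m-i) - 2^(m-i)) * ((n+i).choose n : ℝ)
      + ∑ i ∈ range (n+1), (r^(m-1-i) - 2^(m-1-i)) * ((n+1+i).choose (n+1) : ℝ) := by
    have pascal : ∀ i ∈ range (n+1), (r^(m-i) - 2^(m-i)) * ((n+1+i).choose (n+1) : ℝ)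
        = (r^(m-i) - 2^(m-i)) * ((n+i).choose n : ℝ)
        + (r^(m-i) - 2^(m-i)) * ((n+i).choose (n+1) : ℝ) := by
      intro i _
      have hp : (n+1+i).choose (n+1) = (n+i).choose n + (n+i).choose (n+1) := by
        have h := Nat.choose_succ_succ (n+i) n
        simp only [Nat.succ_eq_add_one] at h
        rw [show n+i+1 = n+1+i by omega] at h
        exact h
      rw [hp]
      push_cast
      ring
    rw [Finset.sum_congr rfl pascal, Finset.sum_add_distrib]
    congr 1
    · -- first sum: last term vanishes since m - n = 0 in ℕ, r^0 - 2^0 = 0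
      rw [Finset.sum_range_succ, show m - n = 0 by omega]
      simp
    · -- second: peel i = 0, C(n, n+1) = 0
      rw [Finset.sum_range_succ' (fun i => (r^(m-i) - 2^(m-i)) * ((n+i).choose (n+1) : ℝ)) n]
      rw [Finset.sum_range_succ, show m-1-n = 0 by omega]
      simp [Nat.choose_eq_zero_of_lt (show n < n+1 by omega)]
      apply Finset.sum_congr rfl
      intro i _
      rw [show m-(i+1) = m-1-i by omega, show n+(i+1) = n+1+i by omega]
  simp only [Faux, show m+1-1 = m by omega, show (n+1)+(m+1) = n+m+2 by omega,
    show n+(m+1) = n+m+1 by omega, show (n+1)+m = n+m+1 by omega]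
  rw [claim]
  ring

private lemma ident4n (n : ℕ) :
    ∑ i ∈ range n, 2^(n-i) * ((n+i).choose n) + (2*n).choose n = 4^n := by
  have h := ident4 n
  rw [Finset.sum_range_succ, show n+n = 2*n by omega, show n-n = 0 by omega,
    pow_zero, mul_one] at h
  rw [← h]
  congr 1
  apply Finset.sum_congr rfl
  intro i _
  have hs : (n+i).choose i = (n+i).choose n := by
    have := Nat.choose_symm (show i ≤ n+i by omega)
    rw [show n+i-i = n by omega] at this
    exact this.symm
  rw [hs, mul_comm]

private lemma Faux_top (r : ℝ) (n : ℕ) :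
    Faux r (n+1) (n+2) = r * Faux r n (n+1) + Faux r (n+1) (n+1) := by
  -- abbreviations
  set CB : ℝ := ((2*n).choose n : ℝ) with hCB
  set U1 : ℝ := ∑ i ∈ range n, (r^(n+1-i) - 2^(n+1-i)) * ((n+i).choose n : ℝ) with hU1
  set TC : ℝ := ∑ i ∈ range n, (r^(n-i) - 2^(n-i)) * ((n+1+i).choose (n+1) : ℝ) with hTC
  set TB : ℝ := ∑ i ∈ range n, (r^(n-i) - 2^(n-i)) * ((n+i).choose n : ℝ) with hTB
  set G : ℝ := ∑ i ∈ range n, (2:ℝ)^(n-i) * ((n+i).choose n : ℝ) with hG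
  -- LHS sum decomposition
  have hTA : ∑ i ∈ range (n+1), (r^(n+1-i) - 2^(n+1-i)) * ((n+1+i).choose (n+1) : ℝ)
      = U1 + (r - 2) * CB + TC := by
    have pascal : ∀ i ∈ range (n+1), (r^(n+1-i) - 2^(n+1-i)) * ((n+1+i).choose (n+1) : ℝ)
        = (r^(n+1-i) - 2^(n+1-i)) * ((n+i).choose n : ℝ)
        + (r^(n+1-i) - 2^(n+1-i)) * ((n+i).choose (n+1) : ℝ) := by
      intro i _
      have hp : (n+1+i).choose (n+1) = (n+i).choose n + (n+i).choose (n+1) := by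
        have h := Nat.choose_succ_succ (n+i) n
        simp only [Nat.succ_eq_add_one] at h
        rw [show n+i+1 = n+1+i by omega] at h
        exact h
      rw [hp]; push_cast; ring
    rw [Finset.sum_congr rfl pascal, Finset.sum_add_distrib]
    congr 1
    · -- = U1 + (r-2)*CB
      rw [Finset.sum_range_succ, show n+1-n = 1 by omega]
      rw [show n+n = 2*n by omega]
      simp only [pow_one, hU1, hCB]
    · -- = TC
      rw [Finset.sum_range_succ'
        (fun i => (r^(n+1-i) - 2^(n+1-i)) * ((n+i).choose (n+1) : ℝ)) n]
      have h0 : ((n+0).choose (n+1) : ℝ) = 0 := by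
        simp [Nat.choose_eq_zero_of_lt]
      rw [h0, mul_zero, add_zero]
      apply Finset.sum_congr rfl
      intro i _
      rw [show n+1-(i+1) = n-i by omega, show n+(i+1) = n+1+i by omega]
  -- RHS inner-sum decomposition : r * TB = U1 - (r-2) * G
  have hrTB : r * TB = U1 - (r - 2) * G := by
    rw [hTB, Finset.mul_sum, hU1, hG, Finset.mul_sum, ← Finset.sum_sub_distrib]
    apply Finset.sum_congr rfl
    intro i hi
    have hlt : i < n := Finset.mem_range.mp hi
    have hpow : r^(n+1-i) = r * r^(n-i) := by
      rw [show n+1-i = (n-i)+1 by omega, pow_succ]; ring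
    have hpow2 : (2:ℝ)^(n+1-i) = 2 * 2^(n-i) := by
      rw [show n+1-i = (n-i)+1 by omega, pow_succ]; ring
    rw [hpow, hpow2]; ring
  -- TC' : the (n+1,n+1) sum equals TC
  have hTCC : ∑ i ∈ range (n+1), (r^(n-i) - 2^(n-i)) * ((n+1+i).choose (n+1) : ℝ) = TC := by
    rw [Finset.sum_range_succ, show n-n = 0 by omega]
    simp [hTC]
  -- ident4 cast
  have hGC : G + CB = 4^n := by
    have h := ident4n n
    have : ((∑ i ∈ range n, 2^(n-i) * ((n+i).choose n) + (2*n).choose n : ℕ) : ℝ) = ((4^n : ℕ) : ℝ) := by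
      exact_mod_cast congrArg Nat.cast h
    push_cast at this
    rw [hG, hCB]
    exact this
  have h4 : (4:ℝ)^n = 2^n * 2^n := by
    rw [show (4:ℝ) = 2*2 by norm_num, mul_pow]
  -- assemble
  simp only [Faux, show n+2-1 = n+1 by omega, show n+1-1 = n by omega,
    show (n+1)+(n+2) = 2*n+3 by omega, show n+(n+1) = 2*n+1 by omega,
    show (n+1)+(n+1) = 2*n+2 by omega]
  rw [hTA, hTCC]
  have hexp : ∀ k : ℕ, (2:ℝ)^(2*n+k) = 2^n * 2^n * 2^k := by
    intro k
    rw [show 2*n+k = n+(n+k) by omega, pow_add, pow_add]; ring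
  rw [hexp 3, hexp 1, hexp 2]
  have hGeq : G = 2^n * 2^n - CB := by
    rw [← h4]; linarith
  calc 2^n*2^n*2^3 + 2*(U1 + (r-2)*CB + TC)
      = r * (2^n*2^n*2^1) + 2*(U1 - (r-2)*(2^n*2^n - CB)) + (2^n*2^n*2^2 + 2*TC) := by ring
    _ = r * (2^n*2^n*2^1) + 2*(U1 - (r-2)*G) + (2^n*2^n*2^2 + 2*TC) := by rw [hGeq]
    _ = r * (2^n*2^n*2^1) + 2*(r*TB) + (2^n*2^n*2^2 + 2*TC) := by rw [hrTB]
    _ = r * (2^n*2^n*2^1 + 2*TB) + (2^n*2^n*2^2 + 2*TC) := by ring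


set_option maxHeartbeats 1000000 in
/-- Asymptotics of the Haar-averaged influence-matrix norm `A_{t,t+1}`
(Appendix F, Eqs. (eq:recA), (eq:equation2)): the solution of the recurrence
`A_{x,0} = (2d²/(d²+1))^x`,
`A_{x,y} = (d²/(d²+1)) (A_{x-1,y} + A_{x,y-1})` for `0 < y ≤ x`,
`A_{x,x+1} = (d²/(d²+1)) (A_{x-1,x} + A_{x,x})`
satisfies `A_{t,t+1} = Θ((2d²/(d²+1))^{2t} t^{-1/2})` as `t → ∞`. -/
theorem A_asymptotics (d : ℝ) (hd : 1 < d) (A : ℕ → ℕ → ℝ)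
    (h0 : ∀ x : ℕ, A x 0 = (2 * d ^ 2 / (d ^ 2 + 1)) ^ x)
    (hrec : ∀ x y : ℕ, 0 < y → y ≤ x →
      A x y = d ^ 2 / (d ^ 2 + 1) * (A (x - 1) y + A x (y - 1)))
    (htop : ∀ x : ℕ,
      A x (x + 1) = d ^ 2 / (d ^ 2 + 1) * (A (x - 1) x + A x x)) :
    ∃ c₁ c₂ : ℝ, ∃ T : ℕ, 0 < c₁ ∧ c₁ ≤ c₂ ∧ ∀ t : ℕ, T ≤ t →
      c₁ * (2 * d ^ 2 / (d ^ 2 + 1)) ^ (2 * t) * (t : ℝ) ^ (-(1 : ℝ) / 2) ≤ A t (t + 1) ∧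
      A t (t + 1) ≤ c₂ * (2 * d ^ 2 / (d ^ 2 + 1)) ^ (2 * t) * (t : ℝ) ^ (-(1 : ℝ) / 2) := by
  have hd2 : (1:ℝ) < d ^ 2 := by nlinarith
  have hdpos : (0:ℝ) < d ^ 2 := by nlinarith
  set q : ℝ := d ^ 2 / (d ^ 2 + 1) with hq
  set r : ℝ := (d ^ 2 + 1) / d ^ 2 with hr
  have hq0 : 0 < q := by rw [hq]; positivity
  have hqr : q * r = 1 := by rw [hq, hr]; field_simp
  have hr1 : 1 < r := by rw [hr, lt_div_iff₀ hdpos]; linarith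
  have hr2 : r < 2 := by rw [hr, div_lt_iff₀ hdpos]; linarith
  have h2q : 2 * d ^ 2 / (d ^ 2 + 1) = 2 * q := by rw [hq]; ring
  clear_value q r
  have h2r0 : (0:ℝ) < 2 - r := by linarith
  -- the key closed form
  have key : ∀ x y : ℕ, y ≤ x + 1 → A x y = q ^ (x + y) * Faux r x y := by
    intro x
    induction x with
    | zero =>
      intro y hy
      interval_cases y
      · rw [h0 0, Faux_y0]; norm_num
      · have h := htop 0
        norm_num at h
        rw [h, h0 0, Faux_y1]
        norm_num
    | succ n ih =>
      intro y
      induction y with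
      | zero =>
        intro _
        rw [h0 (n+1), h2q, Faux_y0, mul_pow]
        ring
      | succ m ihm =>
        intro hy
        by_cases hcase : m + 1 ≤ n + 1
        · rw [hrec (n+1) (m+1) (Nat.succ_pos m) hcase]
          simp only [Nat.add_sub_cancel]
          rw [ih (m+1) hcase, ihm (by omega)]
          rw [Faux_interior r n m (by omega)]
          ring
        · have hm : m = n + 1 := by omega
          subst hm
          rw [htop (n+1)]
          simp only [Nat.add_sub_cancel]
          rw [ih (n+1) (le_refl _), ihm (by omega)]
          rw [show (n:ℕ)+1+1 = n+2 by omega, Faux_top r n]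
          linear_combination (-(q ^ (n + (n + 1)) * q * Faux r n (n+1))) * hqr
  -- constants
  refine ⟨q, 4 * q / (2 - r), 1, hq0, ?_, ?_⟩
  · rw [le_div_iff₀ (by linarith)]
    nlinarith
  intro t ht
  have ht0 : (0:ℝ) < t := by exact_mod_cast ht
  have hst : 0 < Real.sqrt t := Real.sqrt_pos.mpr ht0
  have hrpow : (t:ℝ) ^ (-(1:ℝ)/2) = (Real.sqrt t)⁻¹ := by
    rw [neg_div, Real.rpow_neg ht0.le, ← Real.sqrt_eq_rpow]
  set N : ℝ := ((2*t).choose t : ℝ) with hN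
  have hN0 : 0 < N := by
    rw [hN]
    exact_mod_cast Nat.choose_pos (show t ≤ 2*t by omega)
  -- diagonal formula
  have hGN : (∑ i ∈ range t, (2:ℝ)^(t-i) * ((t+i).choose t : ℝ)) + N = 4 ^ t := by
    have h := ident4n t
    have h2 : ((∑ i ∈ range t, 2^(t-i) * ((t+i).choose t) + (2*t).choose t : ℕ) : ℝ)
        = ((4^t : ℕ) : ℝ) := by exact_mod_cast congrArg Nat.cast h
    push_cast at h2
    rw [hN]
    exact h2
  have hdiag : Faux r t (t+1)
      = 2 * N + 2 * ∑ i ∈ range t, r^(t-i) * ((t+i).choose t : ℝ) := by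
    simp only [Faux, show t+1-1 = t by omega, show t+(t+1) = 2*t+1 by omega]
    have hsplit : ∑ i ∈ range t, (r^(t-i) - 2^(t-i)) * ((t+i).choose t : ℝ)
        = (∑ i ∈ range t, r^(t-i) * ((t+i).choose t : ℝ))
          - ∑ i ∈ range t, (2:ℝ)^(t-i) * ((t+i).choose t : ℝ) := by
      rw [← Finset.sum_sub_distrib]
      apply Finset.sum_congr rfl
      intro i _
      ring
    rw [hsplit]
    have h2t : (2:ℝ)^(2*t+1) = 2 * 4^t := by
      rw [show (4:ℝ) = 2^2 by norm_num, ← pow_mul, pow_succ]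
      ring
    rw [h2t]
    linarith [hGN]
  -- sum bounds
  have hSnonneg : 0 ≤ ∑ i ∈ range t, r^(t-i) * ((t+i).choose t : ℝ) := by
    apply Finset.sum_nonneg
    intro i _
    have : (0:ℝ) ≤ r := by linarith
    positivity
  have hterm : ∀ i ∈ range t, r^(t-i) * ((t+i).choose t : ℝ) ≤ (r/2)^(t-i) * N := by
    intro i hi
    have hlt : i < t := Finset.mem_range.mp hi
    have hdec := choose_decay t (t-i) (by omega) (by omega)
    rw [show 2*t-(t-i) = t+i by omega] at hdec
    have hdecR : (2:ℝ)^(t-i) * ((t+i).choose t : ℝ) ≤ N := by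
      rw [hN]
      exact_mod_cast hdec
    have hr0 : (0:ℝ) ≤ r/2 := by linarith
    calc r^(t-i) * ((t+i).choose t : ℝ)
        = (r/2)^(t-i) * ((2:ℝ)^(t-i) * ((t+i).choose t : ℝ)) := by
          rw [div_pow]
          have h2ne : ((2:ℝ)^(t-i)) ≠ 0 := by positivity
          field_simp
      _ ≤ (r/2)^(t-i) * N := by
          apply mul_le_mul_of_nonneg_left hdecR (by positivity)
  have hgeom : ∑ i ∈ range t, ((r:ℝ)/2)^(t-i) ≤ r / (2 - r) := by
    have hrefl : ∑ i ∈ range t, ((r:ℝ)/2)^(t-i)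
        = ∑ i ∈ range t, ((r:ℝ)/2)^(i+1) := by
      rw [← Finset.sum_range_reflect (fun k => ((r:ℝ)/2)^(k+1)) t]
      apply Finset.sum_congr rfl
      intro i hi
      have : t - 1 - i + 1 = t - i := by
        have := Finset.mem_range.mp hi; omega
      rw [this]
    rw [hrefl]
    have hS : ∑ i ∈ range t, ((r:ℝ)/2)^(i+1) = (r/2) * ∑ i ∈ range t, ((r:ℝ)/2)^i := by
      rw [Finset.mul_sum]
      apply Finset.sum_congr rfl
      intro i _
      rw [pow_succ]
      ring
    rw [hS]
    have hgm := geom_sum_mul ((r:ℝ)/2) t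
    have hpt : (0:ℝ) ≤ (r/2)^t := by positivity
    have hbound : ∑ i ∈ range t, ((r:ℝ)/2)^i ≤ 1 / (1 - r/2) := by
      rw [le_div_iff₀ (by linarith)]
      nlinarith [hgm, hpt]
    calc (r/2) * ∑ i ∈ range t, ((r:ℝ)/2)^i ≤ (r/2) * (1 / (1 - r/2)) := by
          apply mul_le_mul_of_nonneg_left hbound (by linarith)
      _ = r / (2 - r) := by
          rw [div_mul_div_comm, mul_one, show (2:ℝ)*(1-r/2) = 2-r by ring]
  have hFlow : 2 * N ≤ Faux r t (t+1) := by
    rw [hdiag]; linarith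
  have hFhigh : Faux r t (t+1) ≤ (4 / (2 - r)) * N := by
    rw [hdiag]
    have hsum : ∑ i ∈ range t, r^(t-i) * ((t+i).choose t : ℝ)
        ≤ (r/(2-r)) * N := by
      calc ∑ i ∈ range t, r^(t-i) * ((t+i).choose t : ℝ)
          ≤ ∑ i ∈ range t, ((r:ℝ)/2)^(t-i) * N := Finset.sum_le_sum hterm
        _ = (∑ i ∈ range t, ((r:ℝ)/2)^(t-i)) * N := by rw [Finset.sum_mul]
        _ ≤ (r/(2-r)) * N := by
            apply mul_le_mul_of_nonneg_right hgeom hN0.le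
    have h22 : 2 * N + 2 * ((r/(2-r)) * N) = (4/(2-r)) * N := by
      have h2r : (2:ℝ) - r ≠ 0 := ne_of_gt h2r0
      field_simp
      ring
    linarith
  -- central binomial sqrt bounds
  have hNlowsq : (16:ℝ)^t ≤ 4 * t * N^2 := by
    have h := cb_sq_lower t ht
    rw [Nat.centralBinom_eq_two_mul_choose] at h
    rw [hN]
    exact_mod_cast h
  have hNhighsq : (t:ℝ) * N^2 ≤ 16^t := by
    have h := cb_sq_upper t
    have h2 : t * (Nat.centralBinom t)^2 ≤ 16^t :=
      le_trans (Nat.mul_le_mul_right _ (by omega)) h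
    rw [Nat.centralBinom_eq_two_mul_choose] at h2
    rw [hN]
    exact_mod_cast h2
  have h16 : (16:ℝ)^t = ((4:ℝ)^t)^2 := by
    rw [← pow_mul, show (16:ℝ) = 4^2 by norm_num, ← pow_mul]
    ring_nf
  have hNlow : (4:ℝ)^t ≤ 2 * Real.sqrt t * N := by
    have hsq : ((4:ℝ)^t)^2 ≤ (2 * Real.sqrt t * N)^2 := by
      have : (2 * Real.sqrt t * N)^2 = 4 * t * N^2 := by
        rw [mul_pow, mul_pow, Real.sq_sqrt ht0.le]
        ring
      rw [this, ← h16]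
      exact hNlowsq
    have h1 : (0:ℝ) ≤ 2 * Real.sqrt t * N := by positivity
    exact (pow_le_pow_iff_left₀ (by positivity) h1 two_ne_zero).mp hsq
  have hNhigh : Real.sqrt t * N ≤ (4:ℝ)^t := by
    have hsq : (Real.sqrt t * N)^2 ≤ ((4:ℝ)^t)^2 := by
      have : (Real.sqrt t * N)^2 = t * N^2 := by
        rw [mul_pow, Real.sq_sqrt ht0.le]
      rw [this, ← h16]
      exact hNhighsq
    have h1 : (0:ℝ) ≤ Real.sqrt t * N := by positivity
    exact (pow_le_pow_iff_left₀ h1 (by positivity) two_ne_zero).mp hsq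
  -- put it together
  have hA : A t (t+1) = q^(2*t) * q * Faux r t (t+1) := by
    rw [key t (t+1) (by omega)]
    rw [show t+(t+1) = 2*t+1 by omega, pow_succ]
  have hEq : (2 * d ^ 2 / (d ^ 2 + 1)) ^ (2*t) = 4^t * q^(2*t) := by
    rw [h2q, mul_pow, pow_mul]
    norm_num
  rw [hrpow, hA, hEq]
  have hq2t : (0:ℝ) < q^(2*t) * q := by positivity
  constructor
  · -- lower bound
    have h1 : (4:ℝ)^t * (Real.sqrt t)⁻¹ ≤ 2 * N := by
      rw [← div_eq_mul_inv, div_le_iff₀ hst]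
      calc (4:ℝ)^t ≤ 2 * Real.sqrt t * N := hNlow
        _ = 2 * N * Real.sqrt t := by ring
    have h2 : (4:ℝ)^t * (Real.sqrt t)⁻¹ ≤ Faux r t (t+1) := le_trans h1 hFlow
    calc q * (4^t * q^(2*t)) * (Real.sqrt t)⁻¹
        = (q^(2*t) * q) * (4^t * (Real.sqrt t)⁻¹) := by ring
      _ ≤ (q^(2*t) * q) * Faux r t (t+1) := mul_le_mul_of_nonneg_left h2 hq2t.le
      _ = q^(2*t) * q * Faux r t (t+1) := by ring
  · -- upper bound
    have h1 : N ≤ (4:ℝ)^t * (Real.sqrt t)⁻¹ := by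
      rw [← div_eq_mul_inv, le_div_iff₀ hst]
      calc N * Real.sqrt t = Real.sqrt t * N := by ring
        _ ≤ (4:ℝ)^t := hNhigh
    have h2 : Faux r t (t+1) ≤ (4/(2-r)) * ((4:ℝ)^t * (Real.sqrt t)⁻¹) := by
      calc Faux r t (t+1) ≤ (4/(2-r)) * N := hFhigh
        _ ≤ (4/(2-r)) * ((4:ℝ)^t * (Real.sqrt t)⁻¹) := by
            apply mul_le_mul_of_nonneg_left h1 (by positivity)
    calc q^(2*t) * q * Faux r t (t+1)
        ≤ q^(2*t) * q * ((4/(2-r)) * ((4:ℝ)^t * (Real.sqrt t)⁻¹)) :=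
          mul_le_mul_of_nonneg_left h2 hq2t.le
      _ = 4 * q / (2-r) * (4^t * q^(2*t)) * (Real.sqrt t)⁻¹ := by ring
end
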